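/- Let A, B, C be three complex numbers that are not collinear (affinely independent over ℝ), with incenter I and excenters E_A, E_B, E_C. Then arg(((E_A − I)/(E_A − E_C)) · ((E_B − E_C)/(E_B − I))) = −arg((B − C)/(A − C)). (This is the argument part of the theorem on cross ratios of dual quadruplets.) -/

import Mathlib

/-- The incenter of the triangle with vertices `A B C : ℂ`. -/
noncomputable def incenterC (A B C : ℂ) : ℂ :=
  ((dist B C : ℂ) * A + (dist C A : ℂ) * B + (dist A B : ℂ) * C) /
    ((dist B C + dist C A + dist A B : ℝ) : ℂ)

/-- The excenter of the triangle with vertices `A B C : ℂ` opposite the first vertex. -/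
noncomputable def excenterC (A B C : ℂ) : ℂ :=
  ((-(dist B C) : ℂ) * A + (dist C A : ℂ) * B + (dist A B : ℂ) * C) /
    ((-(dist B C) + dist C A + dist A B : ℝ) : ℂ)

open Complex

private lemma collinear_of_sub_eq (A B C : ℂ) (r : ℝ)
    (hr : C - A = (r : ℂ) * (B - A)) : Collinear ℝ ({A, B, C} : Set ℂ) := by
  have hC : C ∈ affineSpan ℝ ({A, B} : Set ℂ) := by
    have hCe : C = AffineMap.lineMap A B r := by
      simp only [AffineMap.lineMap_apply, vsub_eq_sub, vadd_eq_add, Complex.real_smul]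
      linear_combination hr
    rw [hCe]
    exact AffineMap.lineMap_mem_affineSpan_pair r A B
  have h1 := collinear_insert_of_mem_affineSpan_pair hC
  have hset : ({C, A, B} : Set ℂ) = {A, B, C} := by ext x; simp; tauto
  rwa [hset] at h1

private lemma quot_helper (a b s d1 d2 d3 n1 n2 n3 n4 : ℂ)
    (hb : b ≠ 0) (hs : s ≠ 0) (h1 : d1 ≠ 0) (h2 : d2 ≠ 0) (h3 : d3 ≠ 0)
    (hn2 : n2 ≠ 0) (hn4 : n4 ≠ 0) :
    2*a*n1/(d1*s) / (2*b*n2/(d1*d3)) * (2*a*n3/(d2*d3) / (2*b*n4/(d2*s)))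
      = a^2/b^2 * (n1*n3/(n2*n4)) := by
  have hone : (d1 * d1⁻¹) * (d3*d3⁻¹) * (d2*d2⁻¹) * (s*s⁻¹) * ((b*b⁻¹)^2)
      * (n2*n2⁻¹) * (n4*n4⁻¹) = 1 := by
    rw [mul_inv_cancel₀ h1, mul_inv_cancel₀ h3, mul_inv_cancel₀ h2, mul_inv_cancel₀ hs,
      mul_inv_cancel₀ hb, mul_inv_cancel₀ hn2, mul_inv_cancel₀ hn4]
    ring
  field_simp

private lemma strict_tri {x y z : ℂ} (h : ¬ Collinear ℝ ({x, y, z} : Set ℂ)) :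
    dist x z < dist x y + dist y z := by
  rcases lt_or_eq_of_le (dist_triangle x y z) with hlt | heq
  · exact hlt
  · exact absurd (dist_add_dist_eq_iff.mp heq.symm).collinear h


/-- The argument part of the cross-ratio theorem for dual quadruplets:
`arg(((E_A − I)/(E_A − E_C))·((E_B − E_C)/(E_B − I))) = −arg((B − C)/(A − C))`. -/
theorem cross_ratio_arg (A B C : ℂ) (h : AffineIndependent ℝ ![A, B, C]) :
    Complex.arg
      ((excenterC A B C - incenterC A B C) / (excenterC A B C - excenterC C A B) *
        ((excenterC B C A - excenterC C A B) / (excenterC B C A - incenterC A B C))) =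
    -Complex.arg ((B - C) / (A - C)) := by

  have hnc : ¬ Collinear ℝ ({A, B, C} : Set ℂ) :=
    affineIndependent_iff_not_collinear_set.mp h
  -- distinctness
  -- permuted non-collinearity
  have hnc1 : ¬ Collinear ℝ ({B, A, C} : Set ℂ) := by
    intro hcol; apply hnc; have : ({B, A, C} : Set ℂ) = {A, B, C} := by ext x; simp; tauto
    rwa [this] at hcol
  have hnc2 : ¬ Collinear ℝ ({C, B, A} : Set ℂ) := by
    intro hcol; apply hnc; have : ({C, B, A} : Set ℂ) = {A, B, C} := by ext x; simp; tauto
    rwa [this] at hcol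
  have hnc3 : ¬ Collinear ℝ ({A, C, B} : Set ℂ) := by
    intro hcol; apply hnc; have : ({A, C, B} : Set ℂ) = {A, B, C} := by ext x; simp; tauto
    rwa [this] at hcol
  have hAB : A ≠ B := by rintro rfl; exact hnc (by simpa using collinear_pair ℝ A C)
  have hBC : B ≠ C := by rintro rfl; exact hnc (by simpa using collinear_pair ℝ A B)
  have hCA : C ≠ A := by
    rintro rfl; exact hnc (by simpa [Set.insert_comm, Set.pair_comm C B] using collinear_pair ℝ B C)
  have huAB : A - B ≠ 0 := sub_ne_zero.mpr hAB
  have huCB : C - B ≠ 0 := sub_ne_zero.mpr (Ne.symm hBC)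
  have huCA : C - A ≠ 0 := sub_ne_zero.mpr hCA
  set a := dist B C with ha_def
  set b := dist C A with hb_def
  set c := dist A B with hc_def
  have ha : 0 < a := dist_pos.mpr hBC
  have hb : 0 < b := dist_pos.mpr hCA
  have hc : 0 < c := dist_pos.mpr hAB
  have htri1 : a < c + b := by
    have := strict_tri hnc1
    simpa [dist_comm B A, dist_comm A C, ← ha_def, ← hb_def, ← hc_def] using this
  have htri2 : b < a + c := by
    have := strict_tri hnc2
    simpa [dist_comm C B, dist_comm B A, ← ha_def, ← hb_def, ← hc_def] using this
  have htri3 : c < b + a := by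
    have := strict_tri hnc3
    simpa [dist_comm A C, dist_comm C B, ← ha_def, ← hb_def, ← hc_def] using this
  have hsne : ((a + b + c : ℝ) : ℂ) ≠ 0 := Complex.ofReal_ne_zero.mpr (by positivity)
  have hD1ne : ((-a + b + c : ℝ) : ℂ) ≠ 0 :=
    Complex.ofReal_ne_zero.mpr (by intro e; linarith)
  have hD2ne : ((a - b + c : ℝ) : ℂ) ≠ 0 :=
    Complex.ofReal_ne_zero.mpr (by intro e; linarith)
  have hD3ne : ((a + b - c : ℝ) : ℂ) ≠ 0 :=
    Complex.ofReal_ne_zero.mpr (by intro e; linarith)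
  have ha2 : ((a : ℂ))^2 = (B - C) * (starRingEnd ℂ B - starRingEnd ℂ C) := by
    rw [ha_def, Complex.dist_eq, ← Complex.ofReal_pow, Complex.sq_norm,
      Complex.normSq_eq_conj_mul_self, map_sub]
    ring
  have hb2 : ((b : ℂ))^2 = (C - A) * (starRingEnd ℂ C - starRingEnd ℂ A) := by
    rw [hb_def, Complex.dist_eq, ← Complex.ofReal_pow, Complex.sq_norm,
      Complex.normSq_eq_conj_mul_self, map_sub]
    ring
  have hc2 : ((c : ℂ))^2 = (A - B) * (starRingEnd ℂ A - starRingEnd ℂ B) := by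
    rw [hc_def, Complex.dist_eq, ← Complex.ofReal_pow, Complex.sq_norm,
      Complex.normSq_eq_conj_mul_self, map_sub]
    ring
  -- the key non-real quantity
  have hKne : (starRingEnd ℂ A - starRingEnd ℂ B) * (C - A)
      - (starRingEnd ℂ C - starRingEnd ℂ A) * (A - B) ≠ 0 := by
    intro hK0
    have ht : (starRingEnd ℂ) ((starRingEnd ℂ) (A - B) * (C - A))
        = (starRingEnd ℂ) (A - B) * (C - A) := by
      simp only [map_mul, map_sub, Complex.conj_conj]
      linear_combination -hK0
    have htre : ((((starRingEnd ℂ) (A - B) * (C - A)).re : ℝ) : ℂ)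
        = (starRingEnd ℂ) (A - B) * (C - A) := Complex.conj_eq_iff_re.mp ht
    have hns : ((Complex.normSq (A - B) : ℝ) : ℂ) ≠ 0 :=
      Complex.ofReal_ne_zero.mpr (ne_of_gt (Complex.normSq_pos.mpr huAB))
    have hmul : (C - A) * ((Complex.normSq (A - B) : ℝ) : ℂ)
        = ((((starRingEnd ℂ) (A - B) * (C - A)).re : ℝ) : ℂ) * (A - B) := by
      rw [htre, Complex.normSq_eq_conj_mul_self]
      ring
    have hv : C - A
        = ((-(((starRingEnd ℂ) (A - B) * (C - A)).re / Complex.normSq (A - B)) : ℝ) : ℂ)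
          * (B - A) := by
      push_cast
      rw [← neg_div, div_mul_eq_mul_div, eq_comm, div_eq_iff hns]
      linear_combination -hmul
    exact hnc (collinear_of_sub_eq A B C _ hv)
  -- cast nonzero facts
  have haC : (a:ℂ) ≠ 0 := Complex.ofReal_ne_zero.mpr (ne_of_gt ha)
  have hbC : (b:ℂ) ≠ 0 := Complex.ofReal_ne_zero.mpr (ne_of_gt hb)
  have hcC : (c:ℂ) ≠ 0 := Complex.ofReal_ne_zero.mpr (ne_of_gt hc)
  have hsC : (a:ℂ) + b + c ≠ 0 := by exact_mod_cast hsne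
  have h1C : -(a:ℂ) + b + c ≠ 0 := by exact_mod_cast hD1ne
  have hD2R : ((-b + c + a : ℝ) : ℂ) ≠ 0 := Complex.ofReal_ne_zero.mpr (by intro e; linarith)
  have hD3R : ((-c + a + b : ℝ) : ℂ) ≠ 0 := Complex.ofReal_ne_zero.mpr (by intro e; linarith)
  have h2C : (a:ℂ) - b + c ≠ 0 := by exact_mod_cast hD2ne
  have h3C : (a:ℂ) + b - c ≠ 0 := by exact_mod_cast hD3ne
  -- factorization of the denominator pair
  have hD : ((a:ℂ)*(B-A) + (c:ℂ)*(C-B)) * ((a:ℂ)*(A-B) + (c:ℂ)*(C-B))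
      = (A-B)*(C-B)*((starRingEnd ℂ A - starRingEnd ℂ B) * (C - A)
          - (starRingEnd ℂ C - starRingEnd ℂ A) * (A - B)) := by
    linear_combination (C-B)^2 * hc2 - (B-A)^2 * ha2
  have hN24 : ((a:ℂ)*(B-A) + (c:ℂ)*(C-B)) * ((a:ℂ)*(A-B) + (c:ℂ)*(C-B)) ≠ 0 := by
    rw [hD]; exact mul_ne_zero (mul_ne_zero huAB huCB) hKne
  have hN2 : (a:ℂ)*(B-A) + (c:ℂ)*(C-B) ≠ 0 := left_ne_zero_of_mul hN24
  have hN4 : (a:ℂ)*(A-B) + (c:ℂ)*(C-B) ≠ 0 := right_ne_zero_of_mul hN24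
  have key : ((b:ℂ)*(B-A)+(c:ℂ)*(C-A)) * ((b:ℂ)*(A-B)+(c:ℂ)*(C-A)) * (C-B)
      = (C-A) * (((a:ℂ)*(B-A)+(c:ℂ)*(C-B)) * ((a:ℂ)*(A-B)+(c:ℂ)*(C-B))) := by
    linear_combination ((C-A)^2*(C-B) - (C-B)^2*(C-A)) * hc2
      - ((B-A)^2*(C-B)) * hb2 + ((B-A)^2*(C-A)) * ha2
  -- difference formulas
  have hd1 : excenterC A B C - incenterC A B C
      = 2*(a:ℂ) * ((b:ℂ)*(B-A) + (c:ℂ)*(C-A)) / ((-(a:ℂ)+b+c) * ((a:ℂ)+b+c)) := by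
    simp only [excenterC, incenterC, ← ha_def, ← hb_def, ← hc_def]
    rw [div_sub_div _ _ hD1ne hsne, div_eq_div_iff (mul_ne_zero hD1ne hsne)
      (mul_ne_zero h1C hsC)]
    push_cast
    ring
  have hd2 : excenterC A B C - excenterC C A B
      = 2*(b:ℂ) * ((a:ℂ)*(B-A) + (c:ℂ)*(C-B)) / ((-(a:ℂ)+b+c) * ((a:ℂ)+b-c)) := by
    simp only [excenterC, ← ha_def, ← hb_def, ← hc_def]
    rw [div_sub_div _ _ hD1ne hD3R, div_eq_div_iff
      (mul_ne_zero hD1ne hD3R) (mul_ne_zero h1C h3C)]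
    push_cast
    ring
  have hd3 : excenterC B C A - excenterC C A B
      = 2*(a:ℂ) * ((b:ℂ)*(A-B) + (c:ℂ)*(C-A)) / (((a:ℂ)-b+c) * ((a:ℂ)+b-c)) := by
    simp only [excenterC, ← ha_def, ← hb_def, ← hc_def]
    rw [div_sub_div _ _ hD2R hD3R, div_eq_div_iff
      (mul_ne_zero hD2R hD3R) (mul_ne_zero h2C h3C)]
    push_cast
    ring
  have hd4 : excenterC B C A - incenterC A B C
      = 2*(b:ℂ) * ((a:ℂ)*(A-B) + (c:ℂ)*(C-B)) / (((a:ℂ)-b+c) * ((a:ℂ)+b+c)) := by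
    simp only [excenterC, incenterC, ← ha_def, ← hb_def, ← hc_def]
    rw [div_sub_div _ _ hD2R hsne, div_eq_div_iff
      (mul_ne_zero hD2R hsne) (mul_ne_zero h2C hsC)]
    push_cast
    ring
  have hXeq : (excenterC A B C - incenterC A B C) / (excenterC A B C - excenterC C A B) *
        ((excenterC B C A - excenterC C A B) / (excenterC B C A - incenterC A B C))
      = (((a/b)^2 : ℝ) : ℂ) * ((C - A)/(C - B)) := by
    rw [hd1, hd2, hd3, hd4]
    have e : (((b:ℂ)*(B-A)+(c:ℂ)*(C-A)) * ((b:ℂ)*(A-B)+(c:ℂ)*(C-A)))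
        / (((a:ℂ)*(B-A)+(c:ℂ)*(C-B)) * ((a:ℂ)*(A-B)+(c:ℂ)*(C-B))) = (C-A)/(C-B) := by
      rw [div_eq_div_iff hN24 huCB]
      linear_combination key
    rw [quot_helper _ _ _ _ _ _ _ _ _ _ hbC hsC h1C h2C h3C hN2 hN4, e]
    push_cast
    ring
  rw [hXeq]
  have hr : (0:ℝ) < (a/b)^2 := by positivity
  rw [Complex.arg_real_mul _ hr]
  have hargne : ((C - A)/(C - B)).arg ≠ Real.pi := by
    intro hpi
    have him : ((C - A)/(C - B)).im = 0 := (Complex.arg_eq_pi_iff.mp hpi).2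
    have hz : ((C-A)/(C-B)) = ((((C-A)/(C-B)).re : ℝ) : ℂ) := by
      apply Complex.ext <;> simp [him]
    have hCA' : C - A = ((((C-A)/(C-B)).re : ℝ) : ℂ) * (C - B) := by
      rw [← hz]; field_simp
    have hAC : A - C = ((((C-A)/(C-B)).re : ℝ):ℂ) * (B - C) := by linear_combination -hCA'
    exact hnc2 (collinear_of_sub_eq C B A _ hAC)
  have hinv : (B - C)/(A - C) = ((C - A)/(C - B))⁻¹ := by
    rw [inv_div, ← neg_sub C B, ← neg_sub C A, neg_div_neg_eq]
  rw [hinv, Complex.arg_inv, if_neg hargne, neg_neg]
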